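/- Let x₀ < x₁ < … < x₅ be reals, x ∈ (x₂, x₃), and suppose all pairwise midpoints of points in {x₀,…,x₅, x} are distinct. Then the order-1 Sibson interpolation of the value at x from the data (xᵢ, yᵢ) equals the piecewise-linear interpolant: G₁(x) = ( y₂(x₃−x) + y₃(x−x₂) )/(x₃−x₂), where the Sibson weights are the lengths of the intersections of the order-1 Voronoi cell of x in {x₀,…,x₅,x} with the order-1 Voronoi cells of x₂ and x₃ in {x₀,…,x₅}, normalized by the length of the cell of x. -/

import Mathlib

open MeasureTheory

theorem sibson_order1_is_piecewise_linear
    (x0 x1 x2 x3 x4 x5 x : ℝ) (y0 y1 y2 y3 y4 y5 : ℝ)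
    (h01 : x0 < x1) (h12 : x1 < x2) (h23 : x2 < x3) (h34 : x3 < x4) (h45 : x4 < x5)
    (hx2 : x2 < x) (hx3 : x < x3)
    (hmid : ∀ a b c d : Fin 7,
      (![x0, x1, x2, x3, x4, x5, x] a + ![x0, x1, x2, x3, x4, x5, x] b) / 2 =
        (![x0, x1, x2, x3, x4, x5, x] c + ![x0, x1, x2, x3, x4, x5, x] d) / 2 →
      ({a, b} : Finset (Fin 7)) = {c, d}) :
    ((volume (Set.Ioo ((x2 + x) / 2) ((x + x3) / 2) ∩
        Set.Ioo ((x1 + x2) / 2) ((x2 + x3) / 2))).toReal /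
      (volume (Set.Ioo ((x2 + x) / 2) ((x + x3) / 2))).toReal) * y2 +
    ((volume (Set.Ioo ((x2 + x) / 2) ((x + x3) / 2) ∩
        Set.Ioo ((x2 + x3) / 2) ((x3 + x4) / 2))).toReal /
      (volume (Set.Ioo ((x2 + x) / 2) ((x + x3) / 2))).toReal) * y3 =
    (y2 * (x3 - x) + y3 * (x - x2)) / (x3 - x2) := by
  rw [Set.Ioo_inter_Ioo, Set.Ioo_inter_Ioo,
    max_eq_left (by linarith : (x1 + x2) / 2 ≤ (x2 + x) / 2),
    min_eq_right (by linarith : (x2 + x3) / 2 ≤ (x + x3) / 2),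
    max_eq_right (by linarith : (x2 + x) / 2 ≤ (x2 + x3) / 2),
    min_eq_left (by linarith : (x + x3) / 2 ≤ (x3 + x4) / 2),
    Real.volume_Ioo, Real.volume_Ioo, Real.volume_Ioo,
    ENNReal.toReal_ofReal (by linarith), ENNReal.toReal_ofReal (by linarith),
    ENNReal.toReal_ofReal (by linarith)]
  have h1 : (x + x3) / 2 - (x2 + x) / 2 ≠ 0 := by intro h; nlinarith
  have h2 : x3 - x2 ≠ 0 := by intro h; nlinarith
  rw [div_mul_eq_mul_div, div_mul_eq_mul_div, ← add_div,
    div_eq_div_iff h1 h2]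
  ring
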